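/- Let n ≥ 1 and let I_∩ : 𝒜_{n+1} → ℝ and Ī_∩ : 𝒜_n → ℝ satisfy I_∩(f(𝜶)) = Ī_∩(𝜶) for all 𝜶 ∈ 𝒜_n, as well as I_∩({{n+1}}) = Ī_∩({[n]}). Let I_∂ and Ī_∂ be the Möbius inverses of I_∩ and Ī_∩ over the posets 𝒜_{n+1} and 𝒜_n respectively. Then I_∂(f(𝜶)) = Ī_∂(𝜶) for all 𝜶 ∈ 𝒜_n, and I_∂({{n+1}}) = 0. (This formalises steps 1, 2 and 4 of the proof of the paper's Lemma 3: appending the whole system as an extra source leaves the partial-information atoms unchanged, and the atom of the new singleton node vanishes.) -/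

import Mathlib

noncomputable section

open scoped BigOperators

attribute [local instance] Classical.propDecidable

/-- The antichains of nonempty subsets of `[n] = {1,…,n}` (modelled as `Fin n`):
nonempty collections of nonempty subsets of `[n]`, no element of which is contained
in another distinct element. -/
def Antichains (n : ℕ) : Set (Finset (Finset (Fin n))) :=
  {A | A.Nonempty ∧ (∀ a ∈ A, a.Nonempty) ∧ ∀ a ∈ A, ∀ b ∈ A, a ≠ b → ¬a ⊆ b}

/-- The partial order on antichains: `A ⪯ B` iff every `b ∈ B` contains some `a ∈ A`. -/
def achLE {n : ℕ} (A B : Finset (Finset (Fin n))) : Prop :=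
  ∀ b ∈ B, ∃ a ∈ A, a ⊆ b

/-- Strict order on antichains: `A ≺ B` iff `A ⪯ B` and not `B ⪯ A`. -/
def achLT {n : ℕ} (A B : Finset (Finset (Fin n))) : Prop :=
  achLE A B ∧ ¬achLE B A

/-- `S_n⁽ᵏ⁾`: the antichains all of whose elements have cardinality `> k`. -/
def Sset (n k : ℕ) : Set (Finset (Finset (Fin n))) :=
  {A | A ∈ Antichains n ∧ ∀ a ∈ A, k < a.card}

/-- `R_n⁽ᵏ⁾`: the antichains with at least two distinct elements of cardinality `≤ k`. -/
def Rset (n k : ℕ) : Set (Finset (Finset (Fin n))) :=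
  {A | A ∈ Antichains n ∧ ∃ a ∈ A, ∃ b ∈ A, a ≠ b ∧ a.card ≤ k ∧ b.card ≤ k}

/-- `U_n⁽ᵏ⁾(β)`: the antichains containing `β` in which every element other than `β`
has cardinality `> k`. -/
def Uset (n k : ℕ) (β : Finset (Fin n)) : Set (Finset (Finset (Fin n))) :=
  {A | A ∈ Antichains n ∧ β ∈ A ∧ ∀ a ∈ A, a ≠ β → k < a.card}

/-- A subset of `[n]` viewed as a subset of `[n+1]`. -/
def liftSet {n : ℕ} (a : Finset (Fin n)) : Finset (Fin (n + 1)) :=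
  a.map ⟨Fin.castSucc, Fin.castSucc_injective n⟩

/-- The map `f : 𝒜_n → 𝒜_{n+1}`, `f(𝜶) = 𝜶 ∪ {{n+1}}` (the extra element `n+1` of
`[n+1]` is modelled by `Fin.last n`). -/
def fmap {n : ℕ} (A : Finset (Finset (Fin n))) : Finset (Finset (Fin (n + 1))) :=
  A.image liftSet ∪ {({Fin.last n} : Finset (Fin (n + 1)))}

/-!
STATEMENT 14.  Let `I_∩ : 𝒜_{n+1} → ℝ` and `Ī_∩ : 𝒜_n → ℝ` satisfy
`I_∩(f(𝜶)) = Ī_∩(𝜶)` for all `𝜶 ∈ 𝒜_n` and `I_∩({{n+1}}) = Ī_∩({[n]})`, and let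
`I_∂`, `Ī_∂` be their Möbius inverses over the posets `(𝒜_{n+1}, ⪯)` and `(𝒜_n, ⪯)`
(characterised by `g(𝜷) = Σ_{𝜸 ⪯ 𝜷} g_∂(𝜸)`).  Then `I_∂(f(𝜶)) = Ī_∂(𝜶)` for all
`𝜶 ∈ 𝒜_n`, and `I_∂({{n+1}}) = 0`.
-/
section Aux

variable {n : ℕ}

lemma mem_liftSet {a : Finset (Fin n)} {x : Fin (n + 1)} :
    x ∈ liftSet a ↔ ∃ i ∈ a, Fin.castSucc i = x := by
  simp [liftSet]

lemma castSucc_mem_liftSet {a : Finset (Fin n)} {i : Fin n} :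
    Fin.castSucc i ∈ liftSet a ↔ i ∈ a := by
  simp [mem_liftSet, (Fin.castSucc_injective n).eq_iff]

lemma last_not_mem_liftSet (a : Finset (Fin n)) : Fin.last n ∉ liftSet a := by
  simp only [mem_liftSet]
  rintro ⟨i, _, h⟩
  exact (Fin.castSucc_lt_last i).ne h

lemma liftSet_subset_liftSet {a b : Finset (Fin n)} : liftSet a ⊆ liftSet b ↔ a ⊆ b :=
  Finset.map_subset_map

lemma liftSet_injective : Function.Injective (liftSet (n := n)) := by
  intro a b h
  apply Finset.Subset.antisymm <;> rw [← liftSet_subset_liftSet, h]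

lemma liftSet_nonempty {a : Finset (Fin n)} : (liftSet a).Nonempty ↔ a.Nonempty := by
  simp [liftSet, Finset.map_nonempty]

lemma liftSet_ne_last_singleton (a : Finset (Fin n)) :
    liftSet a ≠ ({Fin.last n} : Finset (Fin (n + 1))) := by
  intro h
  have := last_not_mem_liftSet a
  rw [h] at this
  simp at this

lemma mem_fmap {A : Finset (Finset (Fin n))} {b : Finset (Fin (n + 1))} :
    b ∈ fmap A ↔ (∃ a ∈ A, liftSet a = b) ∨ b = {Fin.last n} := by
  rw [or_comm]
  simp [fmap]

lemma last_singleton_mem_fmap (A : Finset (Finset (Fin n))) :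
    ({Fin.last n} : Finset (Fin (n + 1))) ∈ fmap A := mem_fmap.mpr (Or.inr rfl)

lemma fmap_injective : Function.Injective (fmap (n := n)) := by
  intro A B h
  have him : A.image liftSet = B.image liftSet := by
    ext x
    constructor
    · intro hx
      have hx' : x ∈ fmap B := by rw [← h]; exact Finset.mem_union_left _ hx
      rcases Finset.mem_image.mp hx with ⟨a, _, rfl⟩
      rcases mem_fmap.mp hx' with h' | h'
      · exact Finset.mem_image.mpr (by rcases h' with ⟨b, hb, hb'⟩; exact ⟨b, hb, hb'⟩)
      · exact absurd h' (liftSet_ne_last_singleton a)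
    · intro hx
      have hx' : x ∈ fmap A := by rw [h]; exact Finset.mem_union_left _ hx
      rcases Finset.mem_image.mp hx with ⟨a, _, rfl⟩
      rcases mem_fmap.mp hx' with h' | h'
      · exact Finset.mem_image.mpr (by rcases h' with ⟨b, hb, hb'⟩; exact ⟨b, hb, hb'⟩)
      · exact absurd h' (liftSet_ne_last_singleton a)
  exact Finset.image_injective liftSet_injective him

lemma fmap_mem_antichains {A : Finset (Finset (Fin n))} (hA : A ∈ Antichains n) :
    fmap A ∈ Antichains (n + 1) := by
  obtain ⟨hne, hnes, hach⟩ := hA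
  refine ⟨⟨_, last_singleton_mem_fmap A⟩, ?_, ?_⟩
  · intro a ha
    rcases mem_fmap.mp ha with ⟨b, hb, rfl⟩ | rfl
    · exact liftSet_nonempty.mpr (hnes b hb)
    · exact Finset.singleton_nonempty _
  · intro a ha b hb hab hsub
    rcases mem_fmap.mp ha with ⟨a', ha', rfl⟩ | rfl
    · rcases mem_fmap.mp hb with ⟨b', hb', rfl⟩ | rfl
      · have : a' ≠ b' := fun h => hab (by rw [h])
        exact hach a' ha' b' hb' this (liftSet_subset_liftSet.mp hsub)
      · obtain ⟨x, hx⟩ := liftSet_nonempty.mpr (hnes a' ha')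
        have := hsub hx
        rw [Finset.mem_singleton] at this
        exact last_not_mem_liftSet a' (this ▸ hx)
    · rcases mem_fmap.mp hb with ⟨b', hb', rfl⟩ | rfl
      · have := hsub (Finset.mem_singleton_self _)
        exact last_not_mem_liftSet b' this
      · exact hab rfl

lemma achLE_fmap_iff {C A : Finset (Finset (Fin n))} :
    achLE (fmap C) (fmap A) ↔ achLE C A := by
  constructor
  · intro h b hb
    obtain ⟨c, hc, hcsub⟩ := h (liftSet b) (mem_fmap.mpr (Or.inl ⟨b, hb, rfl⟩))
    rcases mem_fmap.mp hc with ⟨c', hc', rfl⟩ | rfl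
    · exact ⟨c', hc', liftSet_subset_liftSet.mp hcsub⟩
    · have := hcsub (Finset.mem_singleton_self _)
      exact absurd this (last_not_mem_liftSet b)
  · intro h b hb
    rcases mem_fmap.mp hb with ⟨b', hb', rfl⟩ | rfl
    · obtain ⟨c, hc, hcsub⟩ := h b' hb'
      exact ⟨liftSet c, mem_fmap.mpr (Or.inl ⟨c, hc, rfl⟩),
        liftSet_subset_liftSet.mpr hcsub⟩
    · exact ⟨_, last_singleton_mem_fmap C, Finset.Subset.refl _⟩

/-- Remove the (absent) last coordinate. -/
def dropSet (a : Finset (Fin (n + 1))) : Finset (Fin n) :=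
  Finset.univ.filter (fun i => Fin.castSucc i ∈ a)

lemma liftSet_dropSet {a : Finset (Fin (n + 1))} (h : Fin.last n ∉ a) :
    liftSet (dropSet a) = a := by
  ext x
  simp only [mem_liftSet, dropSet, Finset.mem_filter, Finset.mem_univ, true_and]
  constructor
  · rintro ⟨i, hi, rfl⟩; exact hi
  · intro hx
    have hxne : x ≠ Fin.last n := fun hh => h (hh ▸ hx)
    obtain ⟨i, rfl⟩ := Fin.exists_castSucc_eq.mpr hxne
    exact ⟨i, hx, rfl⟩

lemma antichain_with_last {C : Finset (Finset (Fin (n + 1)))}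
    (hC : C ∈ Antichains (n + 1)) (hmem : ({Fin.last n} : Finset (Fin (n + 1))) ∈ C)
    (hne : C ≠ ({({Fin.last n} : Finset (Fin (n + 1)))} : Finset (Finset (Fin (n + 1))))) :
    ∃ C' ∈ Antichains n, C = fmap C' := by
  obtain ⟨hCne, hCnes, hach⟩ := hC
  have hnolast : ∀ a ∈ C, a ≠ ({Fin.last n} : Finset (Fin (n + 1))) → Fin.last n ∉ a := by
    intro a ha hane hla
    exact hach _ hmem a ha (Ne.symm hane) (Finset.singleton_subset_iff.mpr hla)
  have hdl : ∀ a ∈ C.erase ({Fin.last n} : Finset (Fin (n + 1))),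
      liftSet (dropSet a) = a := by
    intro a ha
    rw [Finset.mem_erase] at ha
    exact liftSet_dropSet (hnolast a ha.2 ha.1)
  refine ⟨(C.erase ({Fin.last n} : Finset (Fin (n + 1)))).image dropSet, ⟨?_, ?_, ?_⟩, ?_⟩
  · obtain ⟨a, ha, hane⟩ : ∃ a ∈ C, a ≠ ({Fin.last n} : Finset (Fin (n + 1))) := by
      by_contra h
      push_neg at h
      exact hne (Finset.eq_singleton_iff_unique_mem.mpr ⟨hmem, h⟩)
    exact Finset.Nonempty.image ⟨a, Finset.mem_erase.mpr ⟨hane, ha⟩⟩ _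
  · intro a' ha'
    rcases Finset.mem_image.mp ha' with ⟨a, ha, rfl⟩
    have : (liftSet (dropSet a)).Nonempty := by
      rw [hdl a ha]
      exact hCnes a (Finset.mem_of_mem_erase ha)
    exact liftSet_nonempty.mp this
  · intro a' ha' b' hb' hne' hsub'
    rcases Finset.mem_image.mp ha' with ⟨a, ha, rfl⟩
    rcases Finset.mem_image.mp hb' with ⟨b, hb, rfl⟩
    have hab : a ≠ b := fun h => hne' (by rw [h])
    have : a ⊆ b := by
      rw [← hdl a ha, ← hdl b hb]
      exact liftSet_subset_liftSet.mpr hsub'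
    exact hach a (Finset.mem_of_mem_erase ha) b (Finset.mem_of_mem_erase hb) hab this
  · rw [fmap, Finset.image_image]
    have : (C.erase ({Fin.last n} : Finset (Fin (n + 1)))).image (liftSet ∘ dropSet)
        = C.erase ({Fin.last n} : Finset (Fin (n + 1))) := by
      rw [show (C.erase ({Fin.last n} : Finset (Fin (n + 1)))).image (liftSet ∘ dropSet)
          = (C.erase ({Fin.last n} : Finset (Fin (n + 1)))).image id from
        Finset.image_congr (fun a ha => hdl a ha), Finset.image_id]
    rw [this]
    rw [Finset.union_comm, ← Finset.insert_eq, Finset.insert_erase hmem]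


lemma achLE_refl (A : Finset (Finset (Fin n))) : achLE A A :=
  fun b hb => ⟨b, hb, Finset.Subset.refl b⟩

lemma achLE_trans {A B C : Finset (Finset (Fin n))} (h1 : achLE A B) (h2 : achLE B C) :
    achLE A C := by
  intro c hc
  obtain ⟨b, hb, hbc⟩ := h2 c hc
  obtain ⟨a, ha, hab⟩ := h1 b hb
  exact ⟨a, ha, hab.trans hbc⟩

lemma subset_of_achLE_achLE {A B : Finset (Finset (Fin n))}
    (hB : ∀ a ∈ B, ∀ b ∈ B, a ≠ b → ¬a ⊆ b)
    (h1 : achLE A B) (h2 : achLE B A) : B ⊆ A := by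
  intro b hb
  obtain ⟨a, ha, hab⟩ := h1 b hb
  obtain ⟨b', hb', hb'a⟩ := h2 a ha
  have hb'b : b' ⊆ b := hb'a.trans hab
  have hbb : b' = b := by
    by_contra h
    exact hB b' hb' b hb h hb'b
  have : a = b := Finset.Subset.antisymm hab (hbb ▸ hb'a)
  exact this ▸ ha

lemma achLE_antisymm {A B : Finset (Finset (Fin n))} (hA : A ∈ Antichains n)
    (hB : B ∈ Antichains n) (h1 : achLE A B) (h2 : achLE B A) : A = B :=
  Finset.Subset.antisymm (subset_of_achLE_achLE hA.2.2 h2 h1)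
    (subset_of_achLE_achLE hB.2.2 h1 h2)

lemma singleton_mem_antichains {a : Finset (Fin n)} (ha : a.Nonempty) :
    ({a} : Finset (Finset (Fin n))) ∈ Antichains n := by
  refine ⟨Finset.singleton_nonempty a, ?_, ?_⟩
  · intro b hb
    rw [Finset.mem_singleton] at hb
    exact hb ▸ ha
  · intro x hx y hy hxy _
    rw [Finset.mem_singleton] at hx hy
    exact hxy (hx.trans hy.symm)

lemma downset_fmap {A : Finset (Finset (Fin n))} (hA : A ∈ Antichains n)
    {C : Finset (Finset (Fin (n + 1)))} :
    (C ∈ Antichains (n + 1) ∧ achLE C (fmap A)) ↔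
      ∃ C', (C' ∈ Antichains n ∧ achLE C' A) ∧ C = fmap C' := by
  constructor
  · rintro ⟨hC, hle⟩
    have hmemlast : ({Fin.last n} : Finset (Fin (n + 1))) ∈ C := by
      obtain ⟨c, hc, hcs⟩ := hle _ (last_singleton_mem_fmap A)
      have hcne : c.Nonempty := hC.2.1 c hc
      have : c = {Fin.last n} := by
        rcases Finset.subset_singleton_iff.mp hcs with h | h
        · exact absurd h hcne.ne_empty
        · exact h
      exact this ▸ hc
    have hne : C ≠ ({({Fin.last n} : Finset (Fin (n + 1)))} :
        Finset (Finset (Fin (n + 1)))) := by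
      intro h
      obtain ⟨a, ha⟩ := hA.1
      obtain ⟨c, hc, hcs⟩ := hle (liftSet a) (mem_fmap.mpr (Or.inl ⟨a, ha, rfl⟩))
      rw [h, Finset.mem_singleton] at hc
      subst hc
      exact last_not_mem_liftSet a (hcs (Finset.mem_singleton_self _))
    obtain ⟨C', hC', rfl⟩ := antichain_with_last hC hmemlast hne
    exact ⟨C', ⟨hC', achLE_fmap_iff.mp hle⟩, rfl⟩
  · rintro ⟨C', ⟨hC', hle⟩, rfl⟩
    exact ⟨fmap_mem_antichains hC', achLE_fmap_iff.mpr hle⟩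

lemma downset_last {C : Finset (Finset (Fin (n + 1)))} :
    (C ∈ Antichains (n + 1) ∧
        achLE C ({({Fin.last n} : Finset (Fin (n + 1)))} : Finset (Finset (Fin (n + 1))))) ↔
      C = ({({Fin.last n} : Finset (Fin (n + 1)))} : Finset (Finset (Fin (n + 1)))) ∨
        ∃ C' ∈ Antichains n, C = fmap C' := by
  constructor
  · rintro ⟨hC, hle⟩
    have hmemlast : ({Fin.last n} : Finset (Fin (n + 1))) ∈ C := by
      obtain ⟨c, hc, hcs⟩ := hle _ (Finset.mem_singleton_self _)
      have hcne : c.Nonempty := hC.2.1 c hc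
      have : c = {Fin.last n} := by
        rcases Finset.subset_singleton_iff.mp hcs with h | h
        · exact absurd h hcne.ne_empty
        · exact h
      exact this ▸ hc
    by_cases h : C = ({({Fin.last n} : Finset (Fin (n + 1)))} : Finset (Finset (Fin (n + 1))))
    · exact Or.inl h
    · exact Or.inr (antichain_with_last hC hmemlast h)
  · rintro (rfl | ⟨C', hC', rfl⟩)
    · exact ⟨singleton_mem_antichains (Finset.singleton_nonempty _), achLE_refl _⟩
    · refine ⟨fmap_mem_antichains hC', ?_⟩
      intro b hb
      rw [Finset.mem_singleton] at hb
      subst hb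
      exact ⟨_, last_singleton_mem_fmap C', Finset.Subset.refl _⟩

lemma atoms_agree (n : ℕ)
    (Icap Ipart : Finset (Finset (Fin (n + 1))) → ℝ)
    (Icapb Ipartb : Finset (Finset (Fin n)) → ℝ)
    (hmob : ∀ B ∈ Antichains (n + 1),
      Icap B = ∑ C ∈ Finset.univ.filter
        (fun C => C ∈ Antichains (n + 1) ∧ achLE C B), Ipart C)
    (hmobb : ∀ B ∈ Antichains n,
      Icapb B = ∑ C ∈ Finset.univ.filter
        (fun C => C ∈ Antichains n ∧ achLE C B), Ipartb C)
    (hagree : ∀ A ∈ Antichains n, Icap (fmap A) = Icapb A) :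
    ∀ A ∈ Antichains n, Ipart (fmap A) = Ipartb A := by
  suffices H : ∀ k (A : Finset (Finset (Fin n))), A ∈ Antichains n →
      (Finset.univ.filter (fun C => C ∈ Antichains n ∧ achLE C A)).card ≤ k →
      Ipart (fmap A) = Ipartb A by
    intro A hA
    exact H _ A hA le_rfl
  intro k
  induction k with
  | zero =>
    intro A hA hcard
    have hmem : A ∈ Finset.univ.filter (fun C => C ∈ Antichains n ∧ achLE C A) :=
      Finset.mem_filter.mpr ⟨Finset.mem_univ _, hA, achLE_refl A⟩
    have := Finset.card_pos.mpr ⟨A, hmem⟩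
    omega
  | succ k ih =>
    intro A hA hcard
    set DA := Finset.univ.filter (fun C => C ∈ Antichains n ∧ achLE C A) with hDA
    have hAD : A ∈ DA := Finset.mem_filter.mpr ⟨Finset.mem_univ _, hA, achLE_refl A⟩
    have hfilter : Finset.univ.filter
        (fun C => C ∈ Antichains (n + 1) ∧ achLE C (fmap A)) = DA.image fmap := by
      ext C
      simp only [Finset.mem_filter, Finset.mem_univ, true_and, Finset.mem_image, hDA]
      rw [downset_fmap hA]
      constructor
      · rintro ⟨C', hC', rfl⟩
        exact ⟨C', hC', rfl⟩
      · rintro ⟨C', hC', rfl⟩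
        exact ⟨C', hC', rfl⟩
    have hsum : Icap (fmap A) = ∑ C' ∈ DA, Ipart (fmap C') := by
      rw [hmob (fmap A) (fmap_mem_antichains hA), hfilter,
        Finset.sum_image (fun x _ y _ h => fmap_injective h)]
    have heq : ∑ C' ∈ DA, Ipart (fmap C') = ∑ C' ∈ DA, Ipartb C' := by
      rw [← hsum, hagree A hA, hmobb A hA, hDA]
    rw [← Finset.insert_erase hAD, Finset.sum_insert (Finset.notMem_erase A _),
      Finset.sum_insert (Finset.notMem_erase A _)] at heq
    have htail : ∀ C ∈ DA.erase A, Ipart (fmap C) = Ipartb C := by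
      intro C hC
      rw [Finset.mem_erase] at hC
      obtain ⟨hCA, hCmem⟩ := hC
      obtain ⟨hCach, hCle⟩ := (Finset.mem_filter.mp hCmem).2
      apply ih C hCach
      have hsub : Finset.univ.filter (fun D => D ∈ Antichains n ∧ achLE D C)
          ⊆ DA.erase A := by
        intro D hD
        obtain ⟨hDach, hDle⟩ := (Finset.mem_filter.mp hD).2
        refine Finset.mem_erase.mpr ⟨?_, Finset.mem_filter.mpr
          ⟨Finset.mem_univ _, hDach, achLE_trans hDle hCle⟩⟩
        rintro rfl
        exact hCA (achLE_antisymm hCach hA hCle hDle)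
      have h1 := Finset.card_le_card hsub
      have h2 : (DA.erase A).card = DA.card - 1 := Finset.card_erase_of_mem hAD
      have h3 : 0 < DA.card := Finset.card_pos.mpr ⟨A, hAD⟩
      omega
    have : ∑ C ∈ DA.erase A, Ipart (fmap C) = ∑ C ∈ DA.erase A, Ipartb C :=
      Finset.sum_congr rfl htail
    linarith

end Aux

theorem atoms_preserved_by_appending_whole (n : ℕ) (hn : 1 ≤ n)
    (Icap Ipart : Finset (Finset (Fin (n + 1))) → ℝ)
    (Icapb Ipartb : Finset (Finset (Fin n)) → ℝ)
    (hmob : ∀ B ∈ Antichains (n + 1),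
      Icap B = ∑ C ∈ Finset.univ.filter
        (fun C => C ∈ Antichains (n + 1) ∧ achLE C B), Ipart C)
    (hmobb : ∀ B ∈ Antichains n,
      Icapb B = ∑ C ∈ Finset.univ.filter
        (fun C => C ∈ Antichains n ∧ achLE C B), Ipartb C)
    (hagree : ∀ A ∈ Antichains n, Icap (fmap A) = Icapb A)
    (hlast : Icap ({({Fin.last n} : Finset (Fin (n + 1)))} : Finset (Finset (Fin (n + 1))))
      = Icapb ({(Finset.univ : Finset (Fin n))} : Finset (Finset (Fin n)))) :
    (∀ A ∈ Antichains n, Ipart (fmap A) = Ipartb A) ∧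
      Ipart ({({Fin.last n} : Finset (Fin (n + 1)))} : Finset (Finset (Fin (n + 1)))) = 0 := by
  have hpart1 := atoms_agree n Icap Ipart Icapb Ipartb hmob hmobb hagree
  refine ⟨hpart1, ?_⟩
  haveI : Nonempty (Fin n) := ⟨⟨0, hn⟩⟩
  have huniv_ach : ({(Finset.univ : Finset (Fin n))} : Finset (Finset (Fin n)))
      ∈ Antichains n := singleton_mem_antichains Finset.univ_nonempty
  have hlast_ach : ({({Fin.last n} : Finset (Fin (n + 1)))} :
      Finset (Finset (Fin (n + 1)))) ∈ Antichains (n + 1) :=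
    singleton_mem_antichains (Finset.singleton_nonempty _)
  have hfilter2 : Finset.univ.filter (fun C => C ∈ Antichains (n + 1) ∧
        achLE C ({({Fin.last n} : Finset (Fin (n + 1)))} : Finset (Finset (Fin (n + 1)))))
      = insert ({({Fin.last n} : Finset (Fin (n + 1)))} : Finset (Finset (Fin (n + 1))))
          ((Finset.univ.filter (fun C' => C' ∈ Antichains n)).image fmap) := by
    ext C
    simp only [Finset.mem_filter, Finset.mem_univ, true_and, Finset.mem_insert,
      Finset.mem_image]
    rw [downset_last]
    constructor
    · rintro (rfl | ⟨C', hC', rfl⟩)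
      · exact Or.inl rfl
      · exact Or.inr ⟨C', hC', rfl⟩
    · rintro (rfl | ⟨C', hC', rfl⟩)
      · exact Or.inl rfl
      · exact Or.inr ⟨C', hC', rfl⟩
  have hnotmem : ({({Fin.last n} : Finset (Fin (n + 1)))} : Finset (Finset (Fin (n + 1))))
      ∉ (Finset.univ.filter (fun C' => C' ∈ Antichains n)).image fmap := by
    intro h
    rcases Finset.mem_image.mp h with ⟨C', hC', heq⟩
    have hC'a : C' ∈ Antichains n := (Finset.mem_filter.mp hC').2
    obtain ⟨a, ha⟩ := hC'a.1
    have hmem : liftSet a ∈ fmap C' := mem_fmap.mpr (Or.inl ⟨a, ha, rfl⟩)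
    rw [heq, Finset.mem_singleton] at hmem
    exact liftSet_ne_last_singleton a hmem
  have hsum2 := hmob _ hlast_ach
  rw [hfilter2, Finset.sum_insert hnotmem,
    Finset.sum_image (fun x _ y _ h => fmap_injective h)] at hsum2
  have hrw : ∑ C' ∈ Finset.univ.filter (fun C' => C' ∈ Antichains n), Ipart (fmap C')
      = ∑ C' ∈ Finset.univ.filter (fun C' => C' ∈ Antichains n), Ipartb C' :=
    Finset.sum_congr rfl (fun C' hC' => hpart1 C' (Finset.mem_filter.mp hC').2)
  have hfull : Finset.univ.filter (fun C' : Finset (Finset (Fin n)) =>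
        C' ∈ Antichains n ∧ achLE C' ({(Finset.univ : Finset (Fin n))} :
          Finset (Finset (Fin n))))
      = Finset.univ.filter (fun C' => C' ∈ Antichains n) := by
    apply Finset.filter_congr
    intro C _
    constructor
    · exact fun h => h.1
    · intro h
      refine ⟨h, ?_⟩
      intro b hb
      rw [Finset.mem_singleton] at hb
      obtain ⟨a, ha⟩ := h.1
      exact ⟨a, ha, hb ▸ Finset.subset_univ a⟩
  have hsumb := hmobb _ huniv_ach
  rw [hfull] at hsumb
  rw [hrw, ← hsumb, hlast] at hsum2
  linarith
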